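/- Let d, n be positive natural numbers, let S be a real d × d matrix with operator norm ‖S‖₂ ≤ α (α ≥ 0), let x₁, …, xₙ ∈ ℝ^d with ‖xᵢ‖ ≤ 1, let e ∈ ℝ^d be a unit vector, let B ≥ 0, and let Φ be a nonempty set of functions from ℝ^d to ℝ whose empirical Rademacher complexity on x₁, …, xₙ is at most β/√n (and such that for each sign vector σ the set { (1/n)∑ᵢ σᵢ φ(xᵢ) : φ ∈ Φ } is bounded above). Then the class H of functions h(x) = ⟨S W x, e⟩ + φ(x), where W ranges over real d × d matrices with ‖W‖_F ≤ B and φ ranges over Φ, has empirical Rademacher complexity at most (B α + β)/√n, i.e., 2^{−n} ∑_{σ ∈ {−1,1}ⁿ} sup_{h ∈ H} (1/n) ∑ᵢ σᵢ h(xᵢ) ≤ (B α + β)/√n. -/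

import Mathlib

/-- Operator (spectral) norm of a real `d × d` matrix, induced by the Euclidean norm. -/
noncomputable def opNorm {d : ℕ} (M : Matrix (Fin d) (Fin d) ℝ) : ℝ :=
  ‖Matrix.toEuclideanCLM (𝕜 := ℝ) M‖

/-- Frobenius norm of a real `d × d` matrix. -/
noncomputable def frobNorm {d : ℕ} (M : Matrix (Fin d) (Fin d) ℝ) : ℝ :=
  Real.sqrt (∑ i, ∑ j, (M i j) ^ 2)

lemma sign_cases (t : ({-1, 1} : Finset ℝ)) : (t : ℝ) = -1 ∨ (t : ℝ) = 1 := by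
  have h := t.2
  simp only [Finset.mem_insert, Finset.mem_singleton] at h
  exact h

lemma sign_sq (t : ({-1, 1} : Finset ℝ)) : (t : ℝ) ^ 2 = 1 := by
  rcases sign_cases t with h | h <;> rw [h] <;> norm_num

noncomputable def negSign (t : ({-1, 1} : Finset ℝ)) : ({-1, 1} : Finset ℝ) :=
  ⟨-(t : ℝ), by rcases sign_cases t with h | h <;> simp [h]⟩

lemma negSign_coe (t : ({-1, 1} : Finset ℝ)) : ((negSign t : ({-1,1}:Finset ℝ)) : ℝ) = -(t : ℝ) := rfl

lemma negSign_negSign (t : ({-1, 1} : Finset ℝ)) : negSign (negSign t) = t := by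
  apply Subtype.ext; simp [negSign_coe]

lemma card_signs (n : ℕ) : Fintype.card (Fin n → ({-1, 1} : Finset ℝ)) = 2 ^ n := by
  rw [Fintype.card_fun, Fintype.card_coe]
  norm_num

lemma sum_sign_prod {n : ℕ} (i j : Fin n) (hij : i ≠ j) :
    ∑ σ : Fin n → ({-1, 1} : Finset ℝ), (σ i : ℝ) * (σ j : ℝ) = 0 := by
  classical
  apply Finset.sum_ninvolution (fun σ => Function.update σ i (negSign (σ i)))
  · intro σ
    simp only [Function.update_self, Function.update_of_ne hij.symm, negSign_coe]
    ring
  · intro σ _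
    intro h
    have := congrFun h i
    rw [Function.update_self] at this
    have h2 : -(σ i : ℝ) = (σ i : ℝ) := by rw [← negSign_coe, this]
    rcases sign_cases (σ i) with h3 | h3 <;> rw [h3] at h2 <;> norm_num at h2
  · intro σ; exact Finset.mem_univ _
  · intro σ
    funext k
    by_cases hk : k = i
    · subst hk
      simp [Function.update_self, negSign_negSign]
    · simp [Function.update_of_ne hk]

lemma sum_norm_sq {d n : ℕ} (x : Fin n → EuclideanSpace ℝ (Fin d)) :
    ∑ σ : Fin n → ({-1, 1} : Finset ℝ), ‖∑ i, (σ i : ℝ) • x i‖ ^ 2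
      = 2 ^ n * ∑ i, ‖x i‖ ^ 2 := by
  have h1 : ∀ σ : Fin n → ({-1, 1} : Finset ℝ),
      ‖∑ i, (σ i : ℝ) • x i‖ ^ 2
        = ∑ i, ∑ j, (σ i : ℝ) * (σ j : ℝ) * (inner ℝ (x i) (x j) : ℝ) := by
    intro σ
    rw [← real_inner_self_eq_norm_sq, sum_inner]
    refine Finset.sum_congr rfl fun i _ => ?_
    rw [inner_sum]
    refine Finset.sum_congr rfl fun j _ => ?_
    rw [real_inner_smul_left, real_inner_smul_right]
    ring
  simp_rw [h1]
  rw [Finset.sum_comm]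
  have h2 : ∀ i : Fin n,
      ∑ j, ∑ σ : Fin n → ({-1, 1} : Finset ℝ),
          (σ i : ℝ) * (σ j : ℝ) * (inner ℝ (x i) (x j) : ℝ)
        = 2 ^ n * ‖x i‖ ^ 2 := by
    intro i
    rw [Finset.sum_eq_single i]
    · rw [← Finset.sum_mul]
      have : ∑ σ : Fin n → ({-1, 1} : Finset ℝ), (σ i : ℝ) * (σ i : ℝ) = 2 ^ n := by
        have h3 : ∀ σ : Fin n → ({-1, 1} : Finset ℝ), (σ i : ℝ) * (σ i : ℝ) = 1 := by
          intro σ; nlinarith [sign_sq (σ i)]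
        simp_rw [h3]
        simp [card_signs n]
      rw [this, real_inner_self_eq_norm_sq]
    · intro j _ hji
      rw [← Finset.sum_mul, sum_sign_prod i j (Ne.symm hji), zero_mul]
    · intro h; exact absurd (Finset.mem_univ i) h
  calc ∑ i, ∑ σ : Fin n → ({-1, 1} : Finset ℝ), ∑ j,
          (σ i : ℝ) * (σ j : ℝ) * (inner ℝ (x i) (x j) : ℝ)
      = ∑ i, ∑ j, ∑ σ : Fin n → ({-1, 1} : Finset ℝ),
          (σ i : ℝ) * (σ j : ℝ) * (inner ℝ (x i) (x j) : ℝ) :=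
        Finset.sum_congr rfl fun i _ => Finset.sum_comm
    _ = ∑ i, (2 ^ n : ℝ) * ‖x i‖ ^ 2 := Finset.sum_congr rfl fun i _ => h2 i
    _ = 2 ^ n * ∑ i, ‖x i‖ ^ 2 := by rw [Finset.mul_sum]

lemma toEuclideanCLM_apply {d : ℕ} (A : Matrix (Fin d) (Fin d) ℝ)
    (y : EuclideanSpace ℝ (Fin d)) (i : Fin d) :
    (Matrix.toEuclideanCLM (𝕜 := ℝ) A y) i = ∑ j, A i j * y j := by
  have h2 := congrFun (Matrix.ofLp_toEuclideanCLM (𝕜 := ℝ) A y) i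
  simpa [Matrix.mulVec, dotProduct] using h2

lemma opNorm_le_frobNorm {d : ℕ} (W : Matrix (Fin d) (Fin d) ℝ) :
    opNorm W ≤ frobNorm W := by
  apply ContinuousLinearMap.opNorm_le_bound _ (Real.sqrt_nonneg _)
  intro y
  have hy : ‖Matrix.toEuclideanCLM (𝕜 := ℝ) W y‖
      = Real.sqrt (∑ i, (∑ j, W i j * y j) ^ 2) := by
    rw [EuclideanSpace.norm_eq]
    congr 1
    refine Finset.sum_congr rfl fun i _ => ?_
    rw [toEuclideanCLM_apply, Real.norm_eq_abs, sq_abs]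
  have hyn : ‖y‖ = Real.sqrt (∑ j, (y j) ^ 2) := by
    rw [EuclideanSpace.norm_eq]
    congr 1
    refine Finset.sum_congr rfl fun j _ => ?_
    rw [Real.norm_eq_abs, sq_abs]
  rw [hy, hyn]
  rw [← Real.sqrt_mul (by positivity)]
  apply Real.sqrt_le_sqrt
  calc ∑ i, (∑ j, W i j * y j) ^ 2
      ≤ ∑ i, (∑ j, (W i j) ^ 2) * (∑ j, (y j) ^ 2) :=
        Finset.sum_le_sum fun i _ => Finset.sum_mul_sq_le_sq_mul_sq _ _ _
    _ = (∑ i, ∑ j, (W i j) ^ 2) * ∑ j, (y j) ^ 2 := by rw [Finset.sum_mul]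

lemma inner_sign_sum_eq {d n : ℕ}
    (T : EuclideanSpace ℝ (Fin d) →L[ℝ] EuclideanSpace ℝ (Fin d))
    (e : EuclideanSpace ℝ (Fin d)) (x : Fin n → EuclideanSpace ℝ (Fin d))
    (σ : Fin n → ({-1, 1} : Finset ℝ)) :
    ∑ i, (σ i : ℝ) * (inner ℝ (T (x i)) e : ℝ)
      = (inner ℝ (T (∑ i, (σ i : ℝ) • x i)) e : ℝ) := by
  rw [map_sum, sum_inner]
  refine Finset.sum_congr rfl fun i _ => ?_
  rw [map_smul, real_inner_smul_left]

/-- The class of functions `h(x) = ⟨S W x, e⟩ + φ(x)` with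
`‖W‖_F ≤ B` and `φ ∈ Φ`, where `‖S‖₂ ≤ α`, `‖xᵢ‖ ≤ 1`, `‖e‖ = 1`, and `Φ` has
empirical Rademacher complexity at most `β / √n`, has empirical Rademacher
complexity at most `(B α + β) / √n`. -/
theorem rademacher_structured_plus_correction
    (d n : ℕ) (hd : 0 < d) (hn : 0 < n)
    (S : Matrix (Fin d) (Fin d) ℝ) (α : ℝ) (hα : 0 ≤ α) (hS : opNorm S ≤ α)
    (x : Fin n → EuclideanSpace ℝ (Fin d)) (hx : ∀ i, ‖x i‖ ≤ 1)
    (e : EuclideanSpace ℝ (Fin d)) (he : ‖e‖ = 1)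
    (B : ℝ) (hB : 0 ≤ B) (β : ℝ)
    (Φ : Set (EuclideanSpace ℝ (Fin d) → ℝ)) (hΦ : Φ.Nonempty)
    (hΦb : ∀ σ : Fin n → ({-1, 1} : Finset ℝ),
      BddAbove ((fun φ => (1 / n : ℝ) * ∑ i, (σ i : ℝ) * φ (x i)) '' Φ))
    (hΦrad : (1 / 2 ^ n : ℝ) * ∑ σ : Fin n → ({-1, 1} : Finset ℝ),
        sSup ((fun φ => (1 / n : ℝ) * ∑ i, (σ i : ℝ) * φ (x i)) '' Φ)
      ≤ β / Real.sqrt n) :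
    (1 / 2 ^ n : ℝ) * ∑ σ : Fin n → ({-1, 1} : Finset ℝ),
        sSup ((fun h => (1 / n : ℝ) * ∑ i, (σ i : ℝ) * h (x i)) ''
          {h : EuclideanSpace ℝ (Fin d) → ℝ |
            ∃ W : Matrix (Fin d) (Fin d) ℝ, frobNorm W ≤ B ∧ ∃ φ ∈ Φ,
              h = fun z =>
                (inner ℝ (Matrix.toEuclideanCLM (𝕜 := ℝ) (S * W) z) e : ℝ) + φ z})
      ≤ (B * α + β) / Real.sqrt n := by
  classical
  obtain ⟨φ₀, hφ₀⟩ := hΦ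
  have hn' : (0 : ℝ) < n := by exact_mod_cast hn
  set ν : ℝ := Real.sqrt n with hνdef
  have hν : 0 < ν := Real.sqrt_pos.mpr hn'
  have hν2 : ν * ν = (n : ℝ) := Real.mul_self_sqrt hn'.le
  set v : (Fin n → ({-1, 1} : Finset ℝ)) → EuclideanSpace ℝ (Fin d) :=
    fun σ => ∑ i, (σ i : ℝ) • x i with hv
  set c : (Fin n → ({-1, 1} : Finset ℝ)) → ℝ :=
    fun σ => sSup ((fun φ => (1 / n : ℝ) * ∑ i, (σ i : ℝ) * φ (x i)) '' Φ) with hc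
  -- per-σ bound on the supremum
  have key : ∀ σ : Fin n → ({-1, 1} : Finset ℝ),
      sSup ((fun h => (1 / n : ℝ) * ∑ i, (σ i : ℝ) * h (x i)) ''
          {h : EuclideanSpace ℝ (Fin d) → ℝ |
            ∃ W : Matrix (Fin d) (Fin d) ℝ, frobNorm W ≤ B ∧ ∃ φ ∈ Φ,
              h = fun z =>
                (inner ℝ (Matrix.toEuclideanCLM (𝕜 := ℝ) (S * W) z) e : ℝ) + φ z})
        ≤ (1 / n : ℝ) * (α * B * ‖v σ‖) + c σ := by
    intro σ
    apply csSup_le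
    · refine ⟨_, ⟨_, ⟨0, ?_, φ₀, hφ₀, rfl⟩, rfl⟩⟩
      have : frobNorm (0 : Matrix (Fin d) (Fin d) ℝ) = 0 := by
        simp [frobNorm]
      rw [this]; exact hB
    · rintro r ⟨h, ⟨W, hW, φ, hφ, rfl⟩, rfl⟩
      beta_reduce
      have hTW : ‖Matrix.toEuclideanCLM (𝕜 := ℝ) (S * W)‖ ≤ α * B := by
        rw [map_mul]
        calc ‖Matrix.toEuclideanCLM (𝕜 := ℝ) S * Matrix.toEuclideanCLM (𝕜 := ℝ) W‖
            ≤ ‖Matrix.toEuclideanCLM (𝕜 := ℝ) S‖ * ‖Matrix.toEuclideanCLM (𝕜 := ℝ) W‖ :=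
              norm_mul_le _ _
          _ ≤ α * B :=
              mul_le_mul hS ((opNorm_le_frobNorm W).trans hW) (norm_nonneg _) hα
      have hsplit : (1 / n : ℝ) * ∑ i, (σ i : ℝ) *
            ((inner ℝ (Matrix.toEuclideanCLM (𝕜 := ℝ) (S * W) (x i)) e : ℝ) + φ (x i))
          = (1 / n : ℝ) * (inner ℝ (Matrix.toEuclideanCLM (𝕜 := ℝ) (S * W) (v σ)) e : ℝ)
            + (1 / n : ℝ) * ∑ i, (σ i : ℝ) * φ (x i) := by
        rw [← mul_add]
        congr 1
        rw [← inner_sign_sum_eq (Matrix.toEuclideanCLM (𝕜 := ℝ) (S * W)) e x σ,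
          ← Finset.sum_add_distrib]
        exact Finset.sum_congr rfl fun i _ => by ring
      rw [hsplit]
      have h1 : (inner ℝ (Matrix.toEuclideanCLM (𝕜 := ℝ) (S * W) (v σ)) e : ℝ)
          ≤ α * B * ‖v σ‖ := by
        calc (inner ℝ (Matrix.toEuclideanCLM (𝕜 := ℝ) (S * W) (v σ)) e : ℝ)
            ≤ ‖Matrix.toEuclideanCLM (𝕜 := ℝ) (S * W) (v σ)‖ * ‖e‖ :=
              real_inner_le_norm _ _
          _ = ‖Matrix.toEuclideanCLM (𝕜 := ℝ) (S * W) (v σ)‖ := by rw [he, mul_one]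
          _ ≤ ‖Matrix.toEuclideanCLM (𝕜 := ℝ) (S * W)‖ * ‖v σ‖ :=
              ContinuousLinearMap.le_opNorm _ _
          _ ≤ α * B * ‖v σ‖ :=
              mul_le_mul_of_nonneg_right hTW (norm_nonneg _)
      have h2 : (1 / n : ℝ) * ∑ i, (σ i : ℝ) * φ (x i) ≤ c σ :=
        le_csSup (hΦb σ) ⟨φ, hφ, rfl⟩
      have hn1 : (0 : ℝ) ≤ 1 / n := by positivity
      have := mul_le_mul_of_nonneg_left h1 hn1
      linarith
  -- bound on ∑ ‖v σ‖
  have hsum_v : ∑ σ : Fin n → ({-1, 1} : Finset ℝ), ‖v σ‖ ≤ 2 ^ n * ν := by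
    have hsq : (∑ σ : Fin n → ({-1, 1} : Finset ℝ), ‖v σ‖) ^ 2
        ≤ (2 ^ n : ℝ) * ∑ σ : Fin n → ({-1, 1} : Finset ℝ), ‖v σ‖ ^ 2 := by
      have := sq_sum_le_card_mul_sum_sq
        (s := (Finset.univ : Finset (Fin n → ({-1, 1} : Finset ℝ)))) (f := fun σ => ‖v σ‖)
      rwa [Finset.card_univ, card_signs n, Nat.cast_pow, Nat.cast_ofNat] at this
    have hx2 : ∑ i, ‖x i‖ ^ 2 ≤ (n : ℝ) := by
      calc ∑ i, ‖x i‖ ^ 2 ≤ ∑ _i : Fin n, (1 : ℝ) :=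
            Finset.sum_le_sum fun i _ => by nlinarith [hx i, norm_nonneg (x i)]
        _ = (n : ℝ) := by simp
    have hvsq : ∑ σ : Fin n → ({-1, 1} : Finset ℝ), ‖v σ‖ ^ 2 = 2 ^ n * ∑ i, ‖x i‖ ^ 2 :=
      sum_norm_sq x
    have hfin : (∑ σ : Fin n → ({-1, 1} : Finset ℝ), ‖v σ‖) ^ 2 ≤ (2 ^ n * ν) ^ 2 := by
      have : ((2 : ℝ) ^ n * ν) ^ 2 = 2 ^ n * (2 ^ n * (n : ℝ)) := by
        have hν2' : ν ^ 2 = (n : ℝ) := by rw [sq, hν2]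
        rw [mul_pow, hν2']; ring
      rw [this]
      calc (∑ σ : Fin n → ({-1, 1} : Finset ℝ), ‖v σ‖) ^ 2
          ≤ (2 ^ n : ℝ) * ∑ σ : Fin n → ({-1, 1} : Finset ℝ), ‖v σ‖ ^ 2 := hsq
        _ = (2 ^ n : ℝ) * (2 ^ n * ∑ i, ‖x i‖ ^ 2) := by rw [hvsq]
        _ ≤ (2 ^ n : ℝ) * (2 ^ n * (n : ℝ)) := by
            have h2n : (0 : ℝ) ≤ 2 ^ n := by positivity
            exact mul_le_mul_of_nonneg_left (mul_le_mul_of_nonneg_left hx2 h2n) h2n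
    have hnn : (0 : ℝ) ≤ ∑ σ : Fin n → ({-1, 1} : Finset ℝ), ‖v σ‖ :=
      Finset.sum_nonneg fun σ _ => norm_nonneg _
    have hpos : (0 : ℝ) ≤ 2 ^ n * ν := by positivity
    nlinarith
  -- put it together
  have step1 : (1 / 2 ^ n : ℝ) * ∑ σ : Fin n → ({-1, 1} : Finset ℝ),
        sSup ((fun h => (1 / n : ℝ) * ∑ i, (σ i : ℝ) * h (x i)) ''
          {h : EuclideanSpace ℝ (Fin d) → ℝ |
            ∃ W : Matrix (Fin d) (Fin d) ℝ, frobNorm W ≤ B ∧ ∃ φ ∈ Φ,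
              h = fun z =>
                (inner ℝ (Matrix.toEuclideanCLM (𝕜 := ℝ) (S * W) z) e : ℝ) + φ z})
      ≤ (1 / 2 ^ n : ℝ) * ∑ σ : Fin n → ({-1, 1} : Finset ℝ),
          ((1 / n : ℝ) * (α * B * ‖v σ‖) + c σ) := by
    apply mul_le_mul_of_nonneg_left _ (by positivity)
    exact Finset.sum_le_sum fun σ _ => key σ
  have step2 : (1 / 2 ^ n : ℝ) * ∑ σ : Fin n → ({-1, 1} : Finset ℝ),
        ((1 / n : ℝ) * (α * B * ‖v σ‖) + c σ)
      = (1 / 2 ^ n : ℝ) * (1 / n : ℝ) * (α * B)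
          * (∑ σ : Fin n → ({-1, 1} : Finset ℝ), ‖v σ‖)
        + (1 / 2 ^ n : ℝ) * ∑ σ : Fin n → ({-1, 1} : Finset ℝ), c σ := by
    rw [Finset.sum_add_distrib, mul_add]
    congr 1
    rw [Finset.mul_sum, Finset.mul_sum]
    exact Finset.sum_congr rfl fun σ _ => by ring
  have step3 : (1 / 2 ^ n : ℝ) * (1 / n : ℝ) * (α * B)
        * (∑ σ : Fin n → ({-1, 1} : Finset ℝ), ‖v σ‖)
      ≤ B * α / ν := by
    have hcoef : (0 : ℝ) ≤ (1 / 2 ^ n : ℝ) * (1 / n : ℝ) * (α * B) := by positivity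
    calc (1 / 2 ^ n : ℝ) * (1 / n : ℝ) * (α * B)
          * (∑ σ : Fin n → ({-1, 1} : Finset ℝ), ‖v σ‖)
        ≤ (1 / 2 ^ n : ℝ) * (1 / n : ℝ) * (α * B) * (2 ^ n * ν) :=
          mul_le_mul_of_nonneg_left hsum_v hcoef
      _ = B * α / ν := by
          have h2n : (2 : ℝ) ^ n ≠ 0 := by positivity
          field_simp
          linear_combination α * B * hν2
  calc (1 / 2 ^ n : ℝ) * ∑ σ : Fin n → ({-1, 1} : Finset ℝ),
        sSup ((fun h => (1 / n : ℝ) * ∑ i, (σ i : ℝ) * h (x i)) ''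
          {h : EuclideanSpace ℝ (Fin d) → ℝ |
            ∃ W : Matrix (Fin d) (Fin d) ℝ, frobNorm W ≤ B ∧ ∃ φ ∈ Φ,
              h = fun z =>
                (inner ℝ (Matrix.toEuclideanCLM (𝕜 := ℝ) (S * W) z) e : ℝ) + φ z})
      ≤ (1 / 2 ^ n : ℝ) * (1 / n : ℝ) * (α * B)
          * (∑ σ : Fin n → ({-1, 1} : Finset ℝ), ‖v σ‖)
        + (1 / 2 ^ n : ℝ) * ∑ σ : Fin n → ({-1, 1} : Finset ℝ), c σ := by
        rw [← step2]; exact step1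
    _ ≤ B * α / ν + β / ν := add_le_add step3 hΦrad
    _ = (B * α + β) / ν := by rw [add_div]
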